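/- There exists a smooth, pure-dimensional, nondegenerate, reduced (but reducible) curve $C$ in $\mathbb{P}^3$ whose sequence of secant indices is not strictly increasing: namely the union of three pairwise skew lines $L_1, L_2, L_3$ all meeting a fourth line $L$ has $\mathfrak{L}(C) = (1, 3, 3)$. -/

import Mathlib

noncomputable section

open Submodule Module

abbrev V4 := Fin 4 → ℂ

def kmap (i j : Fin 4) : V4 →ₗ[ℂ] (Fin 2 → ℂ) where
  toFun x := ![x i, x j]
  map_add' x y := by funext k; fin_cases k <;> simp
  map_smul' c x := by funext k; fin_cases k <;> simp

def kmap3 : V4 →ₗ[ℂ] (Fin 2 → ℂ) where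
  toFun x := ![x 0 - x 2, x 1 - x 3]
  map_add' x y := by funext k; fin_cases k <;> simp <;> ring
  map_smul' c x := by funext k; fin_cases k <;> simp <;> ring

def gmap : V4 →ₗ[ℂ] ℂ where
  toFun x := x 3 - 2 * x 1
  map_add' x y := by simp; ring
  map_smul' c x := by simp; ring

lemma mem_ker_kmap (i j : Fin 4) (x : V4) :
    x ∈ LinearMap.ker (kmap i j) ↔ x i = 0 ∧ x j = 0 := by
  simp [kmap, LinearMap.mem_ker, funext_iff, Fin.forall_fin_two]

lemma mem_ker_kmap3 (x : V4) :
    x ∈ LinearMap.ker kmap3 ↔ x 0 = x 2 ∧ x 1 = x 3 := by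
  simp [kmap3, LinearMap.mem_ker, funext_iff, Fin.forall_fin_two, sub_eq_zero]

lemma mem_ker_gmap (x : V4) : x ∈ LinearMap.ker gmap ↔ x 3 = 2 * x 1 := by
  simp [gmap, LinearMap.mem_ker, sub_eq_zero]

lemma finrank_ker_of_surj (f : V4 →ₗ[ℂ] (Fin 2 → ℂ)) (hf : Function.Surjective f) :
    finrank ℂ (LinearMap.ker f) = 2 := by
  have h := LinearMap.finrank_range_add_finrank_ker f
  rw [LinearMap.range_eq_top.mpr hf] at h
  simp [finrank_top] at h
  omega

lemma kmap_surj (i j : Fin 4) (hij : i ≠ j) : Function.Surjective (kmap i j) := by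
  intro y
  refine ⟨fun k => if k = i then y 0 else if k = j then y 1 else 0, ?_⟩
  funext k
  fin_cases k <;> simp [kmap, hij.symm]

lemma kmap3_surj : Function.Surjective kmap3 := by
  intro y
  refine ⟨![y 0, y 1, 0, 0], ?_⟩
  funext k
  fin_cases k <;> simp [kmap3]

lemma gmap_surj : Function.Surjective gmap := by
  intro c
  exact ⟨![0, 0, 0, c], by simp [gmap]⟩

lemma finrank_ker_gmap : finrank ℂ (LinearMap.ker gmap) = 3 := by
  have h := LinearMap.finrank_range_add_finrank_ker gmap
  rw [LinearMap.range_eq_top.mpr gmap_surj] at h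
  simp [finrank_top] at h
  omega

def Wa : Submodule ℂ V4 := LinearMap.ker (kmap 2 3)   -- L₁ : span e0,e1
def Wb : Submodule ℂ V4 := LinearMap.ker (kmap 0 1)   -- L₂ : span e2,e3
def Wc : Submodule ℂ V4 := LinearMap.ker kmap3        -- L₃ : span e0+e2, e1+e3
def Wt : Submodule ℂ V4 := LinearMap.ker (kmap 1 3)   -- transversal : span e0,e2
def Mp : Submodule ℂ V4 := LinearMap.ker gmap          -- plane x3 = 2 x1

lemma mem_Wa (x : V4) : x ∈ Wa ↔ x 2 = 0 ∧ x 3 = 0 := mem_ker_kmap 2 3 x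
lemma mem_Wb (x : V4) : x ∈ Wb ↔ x 0 = 0 ∧ x 1 = 0 := mem_ker_kmap 0 1 x
lemma mem_Wc (x : V4) : x ∈ Wc ↔ x 0 = x 2 ∧ x 1 = x 3 := mem_ker_kmap3 x
lemma mem_Wt (x : V4) : x ∈ Wt ↔ x 1 = 0 ∧ x 3 = 0 := mem_ker_kmap 1 3 x
lemma mem_Mp (x : V4) : x ∈ Mp ↔ x 3 = 2 * x 1 := mem_ker_gmap x

lemma finrank_Wa : finrank ℂ Wa = 2 := finrank_ker_of_surj _ (kmap_surj 2 3 (by decide))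
lemma finrank_Wb : finrank ℂ Wb = 2 := finrank_ker_of_surj _ (kmap_surj 0 1 (by decide))
lemma finrank_Wc : finrank ℂ Wc = 2 := finrank_ker_of_surj _ kmap3_surj
lemma finrank_Wt : finrank ℂ Wt = 2 := finrank_ker_of_surj _ (kmap_surj 1 3 (by decide))
lemma finrank_Mp : finrank ℂ Mp = 3 := finrank_ker_gmap

def P0 : Submodule ℂ V4 := span ℂ {![(1:ℂ), 0, 0, 0]}
def P2 : Submodule ℂ V4 := span ℂ {![(0:ℂ), 0, 1, 0]}
def P02 : Submodule ℂ V4 := span ℂ {![(1:ℂ), 0, 1, 0]}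

lemma mem_P0 (x : V4) : x ∈ P0 ↔ x 1 = 0 ∧ x 2 = 0 ∧ x 3 = 0 := by
  rw [P0, Submodule.mem_span_singleton]
  constructor
  · rintro ⟨a, rfl⟩; simp
  · rintro ⟨h1, h2, h3⟩
    exact ⟨x 0, by funext k; fin_cases k <;> simp [h1, h2, h3]⟩

lemma mem_P2 (x : V4) : x ∈ P2 ↔ x 0 = 0 ∧ x 1 = 0 ∧ x 3 = 0 := by
  rw [P2, Submodule.mem_span_singleton]
  constructor
  · rintro ⟨a, rfl⟩; simp
  · rintro ⟨h1, h2, h3⟩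
    exact ⟨x 2, by funext k; fin_cases k <;> simp [h1, h2, h3]⟩

lemma mem_P02 (x : V4) : x ∈ P02 ↔ x 2 = x 0 ∧ x 1 = 0 ∧ x 3 = 0 := by
  rw [P02, Submodule.mem_span_singleton]
  constructor
  · rintro ⟨a, rfl⟩; simp
  · rintro ⟨h1, h2, h3⟩
    exact ⟨x 0, by funext k; fin_cases k <;> simp [h1, h2, h3]⟩

lemma finrank_P0 : finrank ℂ P0 = 1 :=
  finrank_span_singleton (by intro h; have := congrFun h 0; norm_num at this)
lemma finrank_P2 : finrank ℂ P2 = 1 :=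
  finrank_span_singleton (by intro h; have := congrFun h 2; norm_num [Matrix.cons_val_two, Matrix.cons_val_three] at this)
lemma finrank_P02 : finrank ℂ P02 = 1 :=
  finrank_span_singleton (by intro h; have := congrFun h 0; norm_num at this)

lemma P0_ne_P2 : P0 ≠ P2 := by
  intro h
  have : (![(1:ℂ), 0, 0, 0]) ∈ P2 := h ▸ Submodule.mem_span_singleton_self _
  rw [mem_P2] at this
  norm_num at this

lemma P0_ne_P02 : P0 ≠ P02 := by
  intro h
  have : (![(1:ℂ), 0, 0, 0]) ∈ P02 := h ▸ Submodule.mem_span_singleton_self _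
  rw [mem_P02] at this
  norm_num [Matrix.cons_val_two, Matrix.cons_val_three] at this

lemma P2_ne_P02 : P2 ≠ P02 := by
  intro h
  have : (![(0:ℂ), 0, 1, 0]) ∈ P02 := h ▸ Submodule.mem_span_singleton_self _
  rw [mem_P02] at this
  norm_num [Matrix.cons_val_two, Matrix.cons_val_three] at this

lemma ncard_three : ({P0, P2, P02} : Set (Submodule ℂ V4)).ncard = 3 := by
  rw [Set.ncard_insert_of_notMem (by simp [P0_ne_P2, P0_ne_P02]),
    Set.ncard_pair P2_ne_P02]

lemma WtWa : Wt ⊓ Wa = P0 := by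
  ext x
  rw [Submodule.mem_inf, mem_Wt, mem_Wa, mem_P0]
  tauto

lemma WtWb : Wt ⊓ Wb = P2 := by
  ext x
  rw [Submodule.mem_inf, mem_Wt, mem_Wb, mem_P2]
  tauto

lemma WtWc : Wt ⊓ Wc = P02 := by
  ext x
  rw [Submodule.mem_inf, mem_Wt, mem_Wc, mem_P02]
  constructor
  · rintro ⟨⟨h1, h3⟩, h02, h13⟩
    exact ⟨h02.symm, h1, h3⟩
  · rintro ⟨h02, h1, h3⟩
    exact ⟨⟨h1, h3⟩, h02.symm, by rw [h1, h3]⟩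

lemma MpWa : Mp ⊓ Wa = P0 := by
  ext x
  rw [Submodule.mem_inf, mem_Mp, mem_Wa, mem_P0]
  constructor
  · rintro ⟨h, h2, h3⟩
    refine ⟨?_, h2, h3⟩
    have : (2:ℂ) * x 1 = 0 := by rw [← h, h3]
    simpa using this
  · rintro ⟨h1, h2, h3⟩
    exact ⟨by rw [h1, h3]; ring, h2, h3⟩

lemma MpWb : Mp ⊓ Wb = P2 := by
  ext x
  rw [Submodule.mem_inf, mem_Mp, mem_Wb, mem_P2]
  constructor
  · rintro ⟨h, h0, h1⟩
    exact ⟨h0, h1, by rw [h, h1]; ring⟩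
  · rintro ⟨h0, h1, h3⟩
    exact ⟨by rw [h1, h3]; ring, h0, h1⟩

lemma MpWc : Mp ⊓ Wc = P02 := by
  ext x
  rw [Submodule.mem_inf, mem_Mp, mem_Wc, mem_P02]
  constructor
  · rintro ⟨h, h02, h13⟩
    have h1 : x 1 = 0 := by
      have : (2:ℂ) * x 1 - x 1 = 0 := by rw [← h, h13]; ring
      have : (1:ℂ) * x 1 = 0 := by linear_combination this
      simpa using this
    exact ⟨h02.symm, h1, by rw [← h13, h1]⟩
  · rintro ⟨h02, h1, h3⟩
    exact ⟨by rw [h3, h1]; ring, h02.symm, by rw [h1, h3]⟩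

lemma infinite_lines (V : Submodule ℂ V4) (hV : finrank ℂ V = 2) :
    {U : Submodule ℂ V4 | finrank ℂ U = 1 ∧ U ≤ V}.Infinite := by
  have b := finBasisOfFinrankEq ℂ V hV
  set x : V4 := (b 0 : V4) with hxdef
  set y : V4 := (b 1 : V4) with hydef
  have hxV : x ∈ V := (b 0).2
  have hyV : y ∈ V := (b 1).2
  have hind : ∀ a c : ℂ, a • x + c • y = 0 → a = 0 ∧ c = 0 := by
    intro a c h
    have h' : a • b 0 + c • b 1 = 0 := by
      apply Subtype.coe_injective
      simp only [Submodule.coe_add, SetLike.val_smul, ZeroMemClass.coe_zero]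
      exact h
    have hli := Fintype.linearIndependent_iff.mp b.linearIndependent ![a, c]
      (by
        rw [Fin.sum_univ_two]
        simp only [Matrix.cons_val_zero, Matrix.cons_val_one, Matrix.head_cons]
        exact h')
    exact ⟨hli 0, hli 1⟩
  refine Set.infinite_of_injective_forall_mem
    (f := fun c : ℂ => span ℂ {x + c • y}) ?_ ?_
  · intro c d h
    dsimp only at h
    have hmem : x + d • y ∈ span ℂ {x + c • y} := by
      rw [h]; exact Submodule.mem_span_singleton_self _
    rw [Submodule.mem_span_singleton] at hmem
    obtain ⟨t, ht⟩ := hmem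
    have h0 : (t - 1) • x + (t * c - d) • y = 0 := by
      linear_combination (norm := module) ht
    obtain ⟨h1, h2⟩ := hind _ _ h0
    exact (by linear_combination h2 - c * h1 : c = d)
  · intro c
    refine ⟨finrank_span_singleton ?_, ?_⟩
    · intro h0
      have := (hind 1 c (by simpa using h0)).1
      norm_num at this
    · rw [Submodule.span_le, Set.singleton_subset_iff]
      exact V.add_mem hxV (V.smul_mem c hyV)

/-- The points of the union of three lines `ℙ(W₁) ∪ ℙ(W₂) ∪ ℙ(W₃) ⊆ ℙ³`, recorded as
1-dimensional subspaces of `ℂ⁴`. -/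
def curvePts (W₁ W₂ W₃ : Submodule ℂ (Fin 4 → ℂ)) : Set (Submodule ℂ (Fin 4 → ℂ)) :=
  {W | Module.finrank ℂ W = 1 ∧ (W ≤ W₁ ∨ W ≤ W₂ ∨ W ≤ W₃)}

/-- The `j`-th secant index of the union of the three lines: the maximal number of its
points on a `j`-dimensional linear subvariety meeting it in finitely many points (the
intersection of the reduced union of lines with a linear space is automatically
reduced). -/
def secIdxLines (W₁ W₂ W₃ : Submodule ℂ (Fin 4 → ℂ)) (j : ℕ) : ℕ :=
  sSup {c | ∃ M : Submodule ℂ (Fin 4 → ℂ), Module.finrank ℂ M = j + 1 ∧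
    (curvePts W₁ W₂ W₃ ∩ {W | W ≤ M}).Finite ∧
    (curvePts W₁ W₂ W₃ ∩ {W | W ≤ M}).ncard = c}


lemma card_le_three (M : Submodule ℂ V4)
    (hfin : (curvePts Wa Wb Wc ∩ {U | U ≤ M}).Finite) :
    (curvePts Wa Wb Wc ∩ {U | U ≤ M}).ncard ≤ 3 := by
  have hsub : curvePts Wa Wb Wc ∩ {U | U ≤ M} ⊆ {M ⊓ Wa, M ⊓ Wb, M ⊓ Wc} := by
    rintro U ⟨⟨hU1, hle⟩, hM⟩
    have key : ∀ V : Submodule ℂ V4, finrank ℂ V = 2 →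
        (V ≤ Wa ∨ V ≤ Wb ∨ V ≤ Wc) → U ≤ V → U = M ⊓ V := by
      intro V hV2 hVc hUV
      have hle' : U ≤ M ⊓ V := le_inf hM hUV
      have h1 : 1 ≤ finrank ℂ (M ⊓ V : Submodule ℂ V4) := hU1 ▸ Submodule.finrank_mono hle'
      have h2 : finrank ℂ (M ⊓ V : Submodule ℂ V4) ≤ 1 := by
        by_contra hcon
        push_neg at hcon
        have heq : M ⊓ V = V :=
          Submodule.eq_of_le_of_finrank_le inf_le_right (by rw [hV2]; exact hcon)
        have hVM : V ≤ M := by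
          conv_lhs => rw [← heq]
          exact inf_le_left
        refine infinite_lines V hV2 (hfin.subset ?_)
        rintro U' ⟨h1', h2'⟩
        refine ⟨⟨h1', ?_⟩, h2'.trans hVM⟩
        rcases hVc with h | h | h
        · exact Or.inl (h2'.trans h)
        · exact Or.inr (Or.inl (h2'.trans h))
        · exact Or.inr (Or.inr (h2'.trans h))
      refine Submodule.eq_of_le_of_finrank_le hle' ?_
      rw [hU1]
      exact h2
    rcases hle with h | h | h
    · exact Or.inl (key Wa finrank_Wa (Or.inl le_rfl) h)
    · exact Or.inr (Or.inl (key Wb finrank_Wb (Or.inr (Or.inl le_rfl)) h))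
    · exact Or.inr (Or.inr (key Wc finrank_Wc (Or.inr (Or.inr le_rfl)) h))
  calc (curvePts Wa Wb Wc ∩ {U | U ≤ M}).ncard
      ≤ ({M ⊓ Wa, M ⊓ Wb, M ⊓ Wc} : Set (Submodule ℂ V4)).ncard :=
        Set.ncard_le_ncard hsub (Set.toFinite _)
    _ ≤ ({M ⊓ Wb, M ⊓ Wc} : Set (Submodule ℂ V4)).ncard + 1 := Set.ncard_insert_le _ _
    _ ≤ ({M ⊓ Wc} : Set (Submodule ℂ V4)).ncard + 1 + 1 :=
        Nat.add_le_add_right (Set.ncard_insert_le _ _) 1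
    _ = 3 := by simp

lemma inter_eq (M : Submodule ℂ V4) (hi1 : M ⊓ Wa = P0) (hi2 : M ⊓ Wb = P2)
    (hi3 : M ⊓ Wc = P02) :
    curvePts Wa Wb Wc ∩ {U | U ≤ M} = {P0, P2, P02} := by
  ext U
  simp only [Set.mem_inter_iff, Set.mem_setOf_eq, curvePts, Set.mem_insert_iff,
    Set.mem_singleton_iff]
  constructor
  · rintro ⟨⟨hU1, hle⟩, hM⟩
    rcases hle with h | h | h
    · exact Or.inl (Submodule.eq_of_le_of_finrank_le (hi1 ▸ le_inf hM h)
        (by rw [finrank_P0, hU1]))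
    · exact Or.inr (Or.inl (Submodule.eq_of_le_of_finrank_le (hi2 ▸ le_inf hM h)
        (by rw [finrank_P2, hU1])))
    · exact Or.inr (Or.inr (Submodule.eq_of_le_of_finrank_le (hi3 ▸ le_inf hM h)
        (by rw [finrank_P02, hU1])))
  · rintro (rfl | rfl | rfl)
    · exact ⟨⟨finrank_P0, Or.inl (hi1 ▸ inf_le_right)⟩, hi1 ▸ inf_le_left⟩
    · exact ⟨⟨finrank_P2, Or.inr (Or.inl (hi2 ▸ inf_le_right))⟩, hi2 ▸ inf_le_left⟩
    · exact ⟨⟨finrank_P02, Or.inr (Or.inr (hi3 ▸ inf_le_right))⟩, hi3 ▸ inf_le_left⟩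

lemma infab : Wa ⊓ Wb = ⊥ := by
  rw [eq_bot_iff]
  rintro x hx
  rw [Submodule.mem_inf, mem_Wa, mem_Wb] at hx
  obtain ⟨⟨h2, h3⟩, h0, h1⟩ := hx
  rw [Submodule.mem_bot]
  funext k; fin_cases k <;> simp_all

lemma infac : Wa ⊓ Wc = ⊥ := by
  rw [eq_bot_iff]
  rintro x hx
  rw [Submodule.mem_inf, mem_Wa, mem_Wc] at hx
  obtain ⟨⟨h2, h3⟩, h0, h1⟩ := hx
  rw [Submodule.mem_bot]
  funext k; fin_cases k <;> simp_all

lemma infbc : Wb ⊓ Wc = ⊥ := by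
  rw [eq_bot_iff]
  rintro x hx
  rw [Submodule.mem_inf, mem_Wb, mem_Wc] at hx
  obtain ⟨⟨h0, h1⟩, h2, h3⟩ := hx
  rw [Submodule.mem_bot]
  funext k; fin_cases k <;> simp_all

lemma nebot_at : Wa ⊓ Wt ≠ ⊥ := by
  rw [Submodule.ne_bot_iff]
  refine ⟨![(1:ℂ), 0, 0, 0], ?_, ?_⟩
  · rw [Submodule.mem_inf, mem_Wa, mem_Wt]; norm_num [Matrix.cons_val_two, Matrix.cons_val_three]
  · intro h; have := congrFun h 0; norm_num at this

lemma nebot_bt : Wb ⊓ Wt ≠ ⊥ := by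
  rw [Submodule.ne_bot_iff]
  refine ⟨![(0:ℂ), 0, 1, 0], ?_, ?_⟩
  · rw [Submodule.mem_inf, mem_Wb, mem_Wt]; norm_num [Matrix.cons_val_two, Matrix.cons_val_three]
  · intro h; have := congrFun h 2; norm_num [Matrix.cons_val_two, Matrix.cons_val_three] at this

lemma nebot_ct : Wc ⊓ Wt ≠ ⊥ := by
  rw [Submodule.ne_bot_iff]
  refine ⟨![(1:ℂ), 0, 1, 0], ?_, ?_⟩
  · rw [Submodule.mem_inf, mem_Wc, mem_Wt]; norm_num [Matrix.cons_val_two, Matrix.cons_val_three]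
  · intro h; have := congrFun h 0; norm_num at this

lemma sup_eq_top : Wa ⊔ Wb ⊔ Wc = ⊤ := by
  rw [eq_top_iff]
  rintro x -
  have hx : x = ![x 0, x 1, 0, 0] + ![0, 0, x 2, x 3] := by
    funext k; fin_cases k <;> simp
  rw [hx]
  have h1 : (![x 0, x 1, 0, 0] : V4) ∈ Wa := by rw [mem_Wa]; norm_num [Matrix.cons_val_two, Matrix.cons_val_three]
  have h2 : (![0, 0, x 2, x 3] : V4) ∈ Wb := by rw [mem_Wb]; norm_num [Matrix.cons_val_two, Matrix.cons_val_three]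
  exact add_mem (Submodule.mem_sup_left (Submodule.mem_sup_left h1))
    (Submodule.mem_sup_left (Submodule.mem_sup_right h2))

lemma sec0 : secIdxLines Wa Wb Wc 0 = 1 := by
  apply IsGreatest.csSup_eq
  constructor
  · refine ⟨P0, by rw [finrank_P0], ?_, ?_⟩
    · have : curvePts Wa Wb Wc ∩ {U | U ≤ P0} = {P0} := by
        ext U
        simp only [Set.mem_inter_iff, Set.mem_setOf_eq, curvePts, Set.mem_singleton_iff]
        constructor
        · rintro ⟨⟨hU1, _⟩, hM⟩
          exact Submodule.eq_of_le_of_finrank_le hM (by rw [finrank_P0, hU1])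
        · rintro rfl
          exact ⟨⟨finrank_P0, Or.inl (WtWa ▸ inf_le_right)⟩, le_rfl⟩
      rw [this]; exact Set.finite_singleton _
    · have : curvePts Wa Wb Wc ∩ {U | U ≤ P0} = {P0} := by
        ext U
        simp only [Set.mem_inter_iff, Set.mem_setOf_eq, curvePts, Set.mem_singleton_iff]
        constructor
        · rintro ⟨⟨hU1, _⟩, hM⟩
          exact Submodule.eq_of_le_of_finrank_le hM (by rw [finrank_P0, hU1])
        · rintro rfl
          exact ⟨⟨finrank_P0, Or.inl (WtWa ▸ inf_le_right)⟩, le_rfl⟩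
      rw [this, Set.ncard_singleton]
  · rintro c ⟨M, hM, hfin, rfl⟩
    have hsub : curvePts Wa Wb Wc ∩ {U | U ≤ M} ⊆ {M} := by
      rintro U ⟨⟨hU1, _⟩, hUM⟩
      exact Submodule.eq_of_le_of_finrank_le hUM (by rw [hM, hU1])
    calc (curvePts Wa Wb Wc ∩ {U | U ≤ M}).ncard ≤ ({M} : Set _).ncard :=
          Set.ncard_le_ncard hsub (Set.finite_singleton _)
      _ = 1 := Set.ncard_singleton _

lemma sec1 : secIdxLines Wa Wb Wc 1 = 3 := by
  apply IsGreatest.csSup_eq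
  constructor
  · refine ⟨Wt, by rw [finrank_Wt], ?_, ?_⟩
    · rw [inter_eq Wt WtWa WtWb WtWc]; exact Set.toFinite _
    · rw [inter_eq Wt WtWa WtWb WtWc]; exact ncard_three
  · rintro c ⟨M, hM, hfin, rfl⟩
    exact card_le_three M hfin

lemma sec2 : secIdxLines Wa Wb Wc 2 = 3 := by
  apply IsGreatest.csSup_eq
  constructor
  · refine ⟨Mp, by rw [finrank_Mp], ?_, ?_⟩
    · rw [inter_eq Mp MpWa MpWb MpWc]; exact Set.toFinite _
    · rw [inter_eq Mp MpWa MpWb MpWc]; exact ncard_three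
  · rintro c ⟨M, hM, hfin, rfl⟩
    exact card_le_three M hfin

/-- **Strict growth fails for reducible curves.** There is a smooth, pure-dimensional,
nondegenerate, reduced curve `C ⊆ ℙ³` — the union of three pairwise skew lines
`L₁, L₂, L₃` all meeting a fourth line `L` — whose sequence of secant indices is
`𝔏(C) = (1, 3, 3)`, which is not strictly increasing. -/
theorem stmt_5 :
    ∃ W W₁ W₂ W₃ : Submodule ℂ (Fin 4 → ℂ),
      Module.finrank ℂ W = 2 ∧ Module.finrank ℂ W₁ = 2 ∧
      Module.finrank ℂ W₂ = 2 ∧ Module.finrank ℂ W₃ = 2 ∧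
      W₁ ⊓ W₂ = ⊥ ∧ W₁ ⊓ W₃ = ⊥ ∧ W₂ ⊓ W₃ = ⊥ ∧
      W₁ ⊓ W ≠ ⊥ ∧ W₂ ⊓ W ≠ ⊥ ∧ W₃ ⊓ W ≠ ⊥ ∧
      W₁ ⊔ W₂ ⊔ W₃ = ⊤ ∧
      secIdxLines W₁ W₂ W₃ 0 = 1 ∧
      secIdxLines W₁ W₂ W₃ 1 = 3 ∧
      secIdxLines W₁ W₂ W₃ 2 = 3 := by
  exact ⟨Wt, Wa, Wb, Wc, finrank_Wt, finrank_Wa, finrank_Wb, finrank_Wc,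
    infab, infac, infbc, nebot_at, nebot_bt, nebot_ct, sup_eq_top,
    sec0, sec1, sec2⟩

end
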